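/- For m ∈ {1,2} and any γ ∈ [γ_g, 3] (where γ_g ∈ (5/2,3)), writing V_4 = −2λ/(γ+1+m(γ−1)) with λ = 1 + mγz, the point C_5 = −√(V_4(1+V_4)(λ+V_4)/((m+1)V_4+2mz)) satisfies C_5 > −2/3 for all z ∈ [z_g, z_M]. Equivalently, C_5² < 4/9. -/

import Mathlib

/-- `λ = 1 + mγz`. -/
noncomputable def lam (m γ z : ℝ) : ℝ := 1 + m * γ * z

/-- `V_4 = −2λ/(γ+1+m(γ−1))`. -/
noncomputable def V4 (m γ z : ℝ) : ℝ := -2 * lam m γ z / (γ + 1 + m * (γ - 1))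

/-- `C_5 = −√(V_4(1+V_4)(λ+V_4)/((m+1)V_4+2mz))`. -/
noncomputable def C5 (m γ z : ℝ) : ℝ :=
  -Real.sqrt (V4 m γ z * (1 + V4 m γ z) * (lam m γ z + V4 m γ z) /
    ((m + 1) * V4 m γ z + 2 * m * z))

/-- `z_g(γ)` for `m = 1`. -/
noncomputable def zg1 (γ : ℝ) : ℝ :=
  (Real.sqrt (γ ^ 2 + (γ - 1) ^ 2) - γ) / (γ * (γ - 1))

/-- `z_g(γ)` for `m = 2`. -/
noncomputable def zg2 (γ : ℝ) : ℝ :=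
  (Real.sqrt ((2 * γ ^ 2 - γ + 1) ^ 2 + 2 * γ * (γ - 1) * (4 * γ * (γ - 1) + 8 / 3))
    - (2 * γ ^ 2 - γ + 1)) / (γ * (4 * γ * (γ - 1) + 8 / 3))

lemma key1 (γ z : ℝ) (h1 : 5/2 < γ) (h2 : γ ≤ 3) (h3 : 1/10 ≤ z) (h4 : z ≤ 1/8) :
    V4 1 γ z * (1 + V4 1 γ z) * (lam 1 γ z + V4 1 γ z) /
      ((1 + 1) * V4 1 γ z + 2 * 1 * z) < 4/9 := by
  have hγ : (0:ℝ) < γ := by linarith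
  have hd : γ + 1 + 1 * (γ - 1) ≠ 0 := by nlinarith
  have hD : (1 + 1) * V4 1 γ z + 2 * 1 * z = -2/γ := by
    simp only [V4, lam]; rw [show γ + 1 + 1 * (γ - 1) = 2 * γ by ring]; field_simp; ring
  have heq : V4 1 γ z * (1 + V4 1 γ z) * (lam 1 γ z + V4 1 γ z) /
      ((1 + 1) * V4 1 γ z + 2 * 1 * z)
      = (1+γ*z)^2*(γ-1-γ*z)*(γ-1)/(2*γ^2) := by
    rw [hD]
    simp only [V4, lam]
    rw [show γ + 1 + 1 * (γ - 1) = 2 * γ by ring]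
    field_simp
    ring
  rw [heq, div_lt_div_iff₀ (by positivity) (by norm_num : (0:ℝ) < 9)]
  have hw1 : 1/4 ≤ γ*z := by nlinarith
  have hw2 : γ*z ≤ 3/8 := by nlinarith
  nlinarith [mul_nonneg (mul_nonneg (le_of_lt (sub_pos.2 h1)) (sub_nonneg.2 h2)) (show (0:ℝ) ≤ 9*(1+γ*z)^2 - 8 by nlinarith),
    mul_nonneg (sub_nonneg.2 hw1) (sub_nonneg.2 hw2),
    mul_nonneg (mul_nonneg (sub_nonneg.2 hw1) (sub_nonneg.2 hw2)) (sub_nonneg.2 hw2),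
    sq_nonneg (γ*z - 3/8), sq_nonneg (γ*z-1/4)]

lemma key2 (γ z : ℝ) (h1 : 5/2 < γ) (h2 : γ ≤ 3) (h3 : 1/10 ≤ z) (h4 : z ≤ 1/8) :
    V4 2 γ z * (1 + V4 2 γ z) * (lam 2 γ z + V4 2 γ z) /
      ((2 + 1) * V4 2 γ z + 2 * 2 * z) < 4/9 := by
  have hd : γ + 1 + 2 * (γ - 1) ≠ 0 := by nlinarith
  have ha : (-6-4*z : ℝ) ≠ 0 := by nlinarith
  have hb : (3*γ-1 : ℝ) ≠ 0 := by nlinarith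
  have hc : (3+2*z : ℝ) ≠ 0 := by nlinarith
  have hb' : γ * 3 - 1 ≠ 0 := by intro h; apply hb; linarith
  have ha' : -6 - z * 4 ≠ 0 := by intro h; apply ha; linarith
  have hc' : 3 + z * 2 ≠ 0 := by intro h; apply hc; linarith
  have hD : (2 + 1) * V4 2 γ z + 2 * 2 * z = (-6-4*z)/(3*γ-1) := by
    simp only [V4, lam]; rw [show γ + 1 + 2 * (γ - 1) = 3 * γ - 1 by ring]; field_simp; ring
  have heq : V4 2 γ z * (1 + V4 2 γ z) * (lam 2 γ z + V4 2 γ z) /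
      ((2 + 1) * V4 2 γ z + 2 * 2 * z)
      = 3*(1+2*γ*z)^2*(3*γ-3-4*γ*z)*(γ-1)/((3*γ-1)^2*(3+2*z)) := by
    rw [hD]
    simp only [V4, lam]
    rw [show γ + 1 + 2 * (γ - 1) = 3 * γ - 1 by ring]
    field_simp
    ring
  have hQ : (0:ℝ) < (3*γ-1)^2*(3+2*z) := by nlinarith [sq_nonneg (3*γ-1)]
  rw [heq, div_lt_div_iff₀ hQ (by norm_num : (0:ℝ) < 9)]
  have hw1 : 1/4 ≤ γ*z := by nlinarith
  have hw2 : γ*z ≤ 3/8 := by nlinarith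
  nlinarith [mul_nonneg (mul_nonneg (le_of_lt (sub_pos.2 h1)) (sub_nonneg.2 h2)) (show (0:ℝ) ≤ 27*(1+2*γ*z)^2 - 36 by nlinarith),
    mul_nonneg (sub_nonneg.2 hw1) (sub_nonneg.2 hw2),
    mul_nonneg (mul_nonneg (sub_nonneg.2 hw1) (sub_nonneg.2 hw2)) (sub_nonneg.2 hw2),
    mul_nonneg (sub_nonneg.2 h3) (sub_nonneg.2 h4),
    sq_nonneg (γ*z - 3/8), sq_nonneg (γ*z-1/4)]

/-- For `m ∈ {1,2}`, `γ ∈ [γ_g, 3]` (with `γ_g ∈ (5/2,3)`), and `z ∈ [z_g, z_M]`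
(assuming `z_g ≥ 1/10` on this range), one has `C_5 > −2/3`, equivalently `C_5² < 4/9`. -/
theorem C5_gt_neg_two_thirds (m γ z zg : ℝ) (hm : m = 1 ∨ m = 2)
    (hγg : 5 / 2 < γ) (hγ3 : γ ≤ 3)
    (hzg_def : (m = 1 ∧ zg = zg1 γ) ∨ (m = 2 ∧ zg = zg2 γ))
    (hzg10 : 1 / 10 ≤ zg)
    (hz1 : zg ≤ z) (hz2 : z ≤ 1 / (Real.sqrt 2 + Real.sqrt γ) ^ 2) :
    -2 / 3 < C5 m γ z ∧ (C5 m γ z) ^ 2 < 4 / 9 := by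
  have hz10 : 1/10 ≤ z := le_trans hzg10 hz1
  -- z ≤ 1/8
  have hs2 : Real.sqrt 2 ≤ Real.sqrt γ := Real.sqrt_le_sqrt (by linarith)
  have hs2n : (0:ℝ) ≤ Real.sqrt 2 := Real.sqrt_nonneg 2
  have hsq2 : Real.sqrt 2 ^ 2 = 2 := Real.sq_sqrt (by norm_num)
  have h8 : (8:ℝ) ≤ (Real.sqrt 2 + Real.sqrt γ) ^ 2 := by nlinarith
  have hz8 : z ≤ 1/8 := by
    have h0 : (0:ℝ) < (Real.sqrt 2 + Real.sqrt γ) ^ 2 := by nlinarith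
    have := (div_le_div_iff₀ h0 (by norm_num : (0:ℝ) < 8)).2 (by linarith : 1 * 8 ≤ 1 * (Real.sqrt 2 + Real.sqrt γ) ^ 2)
    calc z ≤ 1 / (Real.sqrt 2 + Real.sqrt γ) ^ 2 := hz2
      _ ≤ 1/8 := this
  have key : V4 m γ z * (1 + V4 m γ z) * (lam m γ z + V4 m γ z) /
      ((m + 1) * V4 m γ z + 2 * m * z) < 4/9 := by
    rcases hm with rfl | rfl
    · exact key1 γ z hγg hγ3 hz10 hz8
    · exact key2 γ z hγg hγ3 hz10 hz8
  set E := V4 m γ z * (1 + V4 m γ z) * (lam m γ z + V4 m γ z) /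
      ((m + 1) * V4 m γ z + 2 * m * z) with hE
  have hsqrt : Real.sqrt E < 2/3 := by
    rcases le_or_gt 0 E with h | h
    · calc Real.sqrt E < Real.sqrt (4/9) := Real.sqrt_lt_sqrt h key
        _ = 2/3 := by
            rw [show (4/9:ℝ) = (2/3)^2 by norm_num, Real.sqrt_sq (by norm_num)]
    · rw [Real.sqrt_eq_zero_of_nonpos h.le]; norm_num
  have hnn : 0 ≤ Real.sqrt E := Real.sqrt_nonneg E
  constructor
  · show -2/3 < -Real.sqrt E
    linarith
  · show (-Real.sqrt E)^2 < 4/9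
    nlinarith
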